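/- With the setup of the projection π_L : X ⇢ P^3 from the line L = F_1 ∩ F_2 on the Segre variety X = s(P^2 × P^1) ⊂ P^5: the image π_L(F_1) is a single point P of P^3, the image π_L(F_2) is a line B ⊂ P^3, and P does not lie on B. -/

import Mathlib

open Projectivization Set

/-- `ℙ^(n-1)`-style projective space of the vector space `Fin n → k`. -/
abbrev Pk (k : Type*) [Field k] (n : ℕ) := Projectivization k (Fin n → k)

/-- Segre map on vectors. -/
def segV (k : Type*) [Field k] (x : Fin 3 → k) (y : Fin 2 → k) : Fin 6 → k :=
  fun i => x ⟨i.1 / 2, by have := i.2; omega⟩ * y ⟨i.1 % 2, by omega⟩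

theorem segV_ne_zero (k : Type*) [Field k] {x : Fin 3 → k} {y : Fin 2 → k}
    (hx : x ≠ 0) (hy : y ≠ 0) : segV k x y ≠ 0 := by
  obtain ⟨a, ha⟩ := Function.ne_iff.mp hx
  obtain ⟨b, hb⟩ := Function.ne_iff.mp hy
  intro h
  have ha2 := a.2
  have hb2 := b.2
  have h6 : 2 * a.1 + b.1 < 6 := by omega
  have hkey := congrFun h ⟨2 * a.1 + b.1, h6⟩
  simp only [segV, Pi.zero_apply] at hkey
  have e1 : (⟨(2 * a.1 + b.1) / 2, by omega⟩ : Fin 3) = a := Fin.ext (by simp; omega)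
  have e2 : (⟨(2 * a.1 + b.1) % 2, by omega⟩ : Fin 2) = b := Fin.ext (by simp; omega)
  rw [e1, e2] at hkey
  exact (mul_ne_zero ha hb) hkey

/-- The Segre embedding `s : ℙ² × ℙ¹ → ℙ⁵`. -/
noncomputable def segre (k : Type*) [Field k] (p : Pk k 3) (q : Pk k 2) : Pk k 6 :=
  Projectivization.mk k (segV k p.rep q.rep) (segV_ne_zero k p.rep_nonzero q.rep_nonzero)

/-- The Segre threefold `X = s(ℙ² × ℙ¹) ⊆ ℙ⁵`. -/
def SegreX (k : Type*) [Field k] : Set (Pk k 6) := {z | ∃ p q, z = segre k p q}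

/-- The set of points of projective space lying in a linear subspace `W`. -/
def projLin {k : Type*} [Field k] {n : ℕ} (W : Submodule k (Fin n → k)) : Set (Pk k n) :=
  {p | p.rep ∈ W}

/-- The plane `F₁ = s(ℙ² × {a})` of the ruling. -/
def F1set (k : Type*) [Field k] (a : Pk k 2) : Set (Pk k 6) := {z | ∃ p, z = segre k p a}
/-- The quadric surface `F₂ = s(l × ℙ¹)` for a line `l ⊆ ℙ²` (given by a 2-dimensional
vector subspace of `Fin 3 → k`). -/
def F2set (k : Type*) [Field k] (l : Submodule k (Fin 3 → k)) : Set (Pk k 6) :=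
  {z | ∃ p q, p.rep ∈ l ∧ z = segre k p q}

/-- The 2-dimensional vector subspace corresponding to the line `L = F₁ ∩ F₂ ⊆ ℙ⁵`. -/
def WL (k : Type*) [Field k] (l : Submodule k (Fin 3 → k)) (a : Pk k 2) :
    Submodule k (Fin 6 → k) :=
  Submodule.span k {v | ∃ x ∈ l, v = segV k x a.rep}

/-- A subset of projective space is (Zariski-)closed algebraic iff it is the common zero set
of a family of homogeneous polynomials. -/
def AlgSet {k : Type*} [Field k] {n : ℕ} (S : Set (Pk k n)) : Prop :=
  ∃ T : Set (MvPolynomial (Fin n) k), (∀ f ∈ T, ∃ d, f.IsHomogeneous d) ∧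
    S = {p | ∀ f ∈ T, MvPolynomial.eval p.rep f = 0}

/-- The linear projection `ℙ⁵ ⇢ ℙ³` induced by a linear map `π` (defined away from the
projectivization of `ker π`, junk value elsewhere). -/
noncomputable def projFrom (k : Type*) [Field k] (π : (Fin 6 → k) →ₗ[k] (Fin 4 → k))
    (p : Pk k 6) : Pk k 4 :=
  letI := Classical.propDecidable
  if h : π p.rep ≠ 0 then Projectivization.mk k (π p.rep) h
  else Projectivization.mk k (fun _ => 1) (fun h0 => one_ne_zero (congrFun h0 0))

section aux
variable {k : Type*} [Field k]

lemma segV_add_left (x x' : Fin 3 → k) (y : Fin 2 → k) :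
    segV k (x + x') y = segV k x y + segV k x' y := by
  funext i; simp [segV, add_mul]

lemma segV_smul_left (c : k) (x : Fin 3 → k) (y : Fin 2 → k) :
    segV k (c • x) y = c • segV k x y := by
  funext i; simp [segV, mul_assoc]

lemma segV_add_right (x : Fin 3 → k) (y y' : Fin 2 → k) :
    segV k x (y + y') = segV k x y + segV k x y' := by
  funext i; simp [segV, mul_add]

lemma segV_smul_right (c : k) (x : Fin 3 → k) (y : Fin 2 → k) :
    segV k x (c • y) = c • segV k x y := by
  funext i; simp [segV]; ring

lemma segV_zero_left (y : Fin 2 → k) : segV k 0 y = 0 := by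
  funext i; simp [segV]

/-- Segre map as a linear map in the first variable. -/
def segL (y : Fin 2 → k) : (Fin 3 → k) →ₗ[k] (Fin 6 → k) where
  toFun x := segV k x y
  map_add' x x' := segV_add_left x x' y
  map_smul' c x := segV_smul_left c x y

@[simp] lemma segL_apply (y : Fin 2 → k) (x : Fin 3 → k) : segL y x = segV k x y := rfl

lemma segV_apply' (x : Fin 3 → k) (y : Fin 2 → k) (i : Fin 3) (j : Fin 2) :
    segV k x y ⟨2 * i.1 + j.1, by omega⟩ = x i * y j := by
  have hi := i.2; have hj := j.2
  simp only [segV]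
  congr 1
  · congr 1; exact Fin.ext (by simp; omega)
  · congr 1; exact Fin.ext (by simp; omega)

lemma seg_key {y z : Fin 2 → k} (h : LinearIndependent k ![y, z])
    {u v u' v' : Fin 3 → k}
    (he : segV k u y + segV k v z = segV k u' y + segV k v' z) :
    u = u' ∧ v = v' := by
  have hrow : ∀ i : Fin 3, (u i - u' i) = 0 ∧ (v i - v' i) = 0 := by
    intro i
    refine LinearIndependent.pair_iff.mp h _ _ ?_
    funext j
    have hc := congrFun he ⟨2 * i.1 + j.1, by omega⟩
    simp only [Pi.add_apply, segV_apply'] at hc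
    simp only [Pi.add_apply, Pi.smul_apply, smul_eq_mul, Pi.zero_apply]
    linear_combination hc
  constructor <;> funext i
  · exact sub_eq_zero.mp (hrow i).1
  · exact sub_eq_zero.mp (hrow i).2

lemma WL_eq (l : Submodule k (Fin 3 → k)) (a : Pk k 2) :
    WL k l a = Submodule.map (segL a.rep) l := by
  unfold WL
  rw [← Submodule.span_eq (Submodule.map (segL a.rep) l)]
  congr 1
  ext v
  simp only [Set.mem_setOf_eq, SetLike.mem_coe, Submodule.mem_map, segL_apply]
  constructor
  · rintro ⟨x, hx, rfl⟩; exact ⟨x, hx, rfl⟩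
  · rintro ⟨x, hx, rfl⟩; exact ⟨x, hx, rfl⟩

lemma projFrom_eq (π : (Fin 6 → k) →ₗ[k] (Fin 4 → k)) (w : Pk k 6)
    (h : π w.rep ≠ 0) : projFrom k π w = Projectivization.mk k (π w.rep) h := by
  unfold projFrom
  rw [dif_pos h]

lemma rep_segre (p : Pk k 3) (q : Pk k 2) :
    ∃ c : kˣ, (segre k p q).rep = segV k ((c : k) • p.rep) q.rep := by
  obtain ⟨c, hc⟩ := exists_smul_eq_mk_rep k (segV k p.rep q.rep)
    (segV_ne_zero k p.rep_nonzero q.rep_nonzero)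
  refine ⟨c, ?_⟩
  rw [segV_smul_left]
  have hc' : (c : k) • segV k p.rep q.rep = (segre k p q).rep := hc
  exact hc'.symm

end aux

/-- for the projection π_L : X ⇢ ℙ³ from the line L = F₁ ∩ F₂ of the Segre
threefold, the image of F₁ (away from L) is a single point P of ℙ³, the image of F₂ (away
from L) is a line B of ℙ³, and P does not lie on B. -/
theorem statement3 (k : Type*) [Field k] [IsAlgClosed k]
    (a : Pk k 2) (l : Submodule k (Fin 3 → k)) (hl : Module.finrank k l = 2)
    (π : (Fin 6 → k) →ₗ[k] (Fin 4 → k)) (hπ : Function.Surjective π)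
    (hker : LinearMap.ker π = WL k l a) :
    ∃ (P0 : Pk k 4) (WB : Submodule k (Fin 4 → k)), Module.finrank k WB = 2 ∧
      projFrom k π '' (F1set k a \ projLin (WL k l a)) = {P0} ∧
      projFrom k π '' (F2set k l \ projLin (WL k l a)) = projLin WB ∧
      P0 ∉ projLin WB := by
  classical
  set ar : Fin 2 → k := a.rep with har
  have harne : ar ≠ 0 := a.rep_nonzero
  -- choose b with ![ar, b] independent
  set b : Fin 2 → k := if ar 0 = 0 then ![1, 0] else ![0, 1] with hb
  have hab : LinearIndependent k ![ar, b] := by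
    rw [LinearIndependent.pair_iff]
    intro s t hst
    have h0 := congrFun hst 0
    have h1 := congrFun hst 1
    simp only [Pi.add_apply, Pi.smul_apply, smul_eq_mul, Pi.zero_apply] at h0 h1
    by_cases hc : ar 0 = 0
    · simp only [hb, if_pos hc] at h0 h1
      simp only [Matrix.cons_val_zero, Matrix.cons_val_one, Matrix.head_cons] at h0 h1
      rw [hc] at h0
      have ht : t = 0 := by linear_combination h0
      have har1 : ar 1 ≠ 0 := by
        intro h1'
        apply harne
        funext j
        fin_cases j <;> simp [hc, h1']
      refine ⟨?_, ht⟩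
      rw [ht] at h1
      have hs1 : s * ar 1 = 0 := by linear_combination h1
      exact (mul_eq_zero.mp hs1).resolve_right har1
    · simp only [hb, if_neg hc] at h0 h1
      simp only [Matrix.cons_val_zero, Matrix.cons_val_one, Matrix.head_cons] at h0 h1
      have hs0 : s * ar 0 = 0 := by linear_combination h0
      have hs : s = 0 := (mul_eq_zero.mp hs0).resolve_right hc
      refine ⟨hs, ?_⟩
      rw [hs] at h1
      linear_combination h1
  have hbne : b ≠ 0 := by
    intro h
    have := (LinearIndependent.pair_iff.mp hab 0 1 (by rw [h]; simp)).2
    exact one_ne_zero this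
  -- every vector of k² is a combination of ar and b
  have hspan : ∀ y : Fin 2 → k, ∃ c d : k, y = c • ar + d • b := by
    have htop : Submodule.span k (Set.range ![ar, b]) = ⊤ :=
      hab.span_eq_top_of_card_eq_finrank (by simp [Module.finrank_fin_fun])
    intro y
    have hy : y ∈ Submodule.span k ({ar, b} : Set (Fin 2 → k)) := by
      have hr : Set.range ![ar, b] = {ar, b} := by
        ext v
        simp [Fin.exists_fin_two, or_comm]
      rw [← hr, htop]; trivial
    obtain ⟨c, d, hcd⟩ := Submodule.mem_span_pair.mp hy
    exact ⟨c, d, hcd.symm⟩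
  -- a vector outside l
  have hx0' : ∃ x0, x0 ∉ l := by
    by_contra h
    push_neg at h
    have hlt : l = ⊤ := Submodule.eq_top_iff'.mpr h
    rw [hlt, finrank_top, Module.finrank_fin_fun] at hl
    omega
  obtain ⟨x0, hx0⟩ := hx0'
  have hx0ne : x0 ≠ 0 := fun h => hx0 (h ▸ l.zero_mem)
  have hWL : WL k l a = Submodule.map (segL ar) l := WL_eq l a
  have hmemWL : ∀ v, v ∈ WL k l a ↔ ∃ x ∈ l, v = segV k x ar := by
    intro v
    rw [hWL]
    simp only [Submodule.mem_map, segL_apply]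
    constructor
    · rintro ⟨x, hx, rfl⟩; exact ⟨x, hx, rfl⟩
    · rintro ⟨x, hx, rfl⟩; exact ⟨x, hx, rfl⟩
  -- membership of l characterizes vanishing of π on segV x ar
  have hgen : ∀ x : Fin 3 → k, π (segV k x ar) = 0 ↔ x ∈ l := by
    intro x
    constructor
    · intro h
      have hm : segV k x ar ∈ WL k l a := by
        rw [← hker]; exact h
      obtain ⟨x', hx', he⟩ := (hmemWL _).mp hm
      have hxx : x = x' ∧ (0 : Fin 3 → k) = 0 := by
        apply seg_key hab
        rw [segV_zero_left, add_zero, add_zero, he]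
      exact hxx.1 ▸ hx'
    · intro h
      have hm : segV k x ar ∈ WL k l a := (hmemWL _).mpr ⟨x, h, rfl⟩
      rw [← hker] at hm
      exact hm
  have hinjb : ∀ x : Fin 3 → k, π (segV k x b) = 0 → x = 0 := by
    intro x h
    have hm : segV k x b ∈ WL k l a := by rw [← hker]; exact h
    obtain ⟨x', hx', he⟩ := (hmemWL _).mp hm
    have hxx : (0 : Fin 3 → k) = x' ∧ x = 0 := by
      apply seg_key hab
      rw [segV_zero_left, segV_zero_left, zero_add, add_zero, he]
    exact hxx.2
  have hx0π : π (segV k x0 ar) ≠ 0 := fun h => hx0 ((hgen x0).mp h)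
  -- the point P0 and the line WB
  refine ⟨Projectivization.mk k (π (segV k x0 ar)) hx0π,
    Submodule.map (π.comp (segL b)) l, ?_, ?_, ?_, ?_⟩
  · -- finrank = 2
    have hinj : Function.Injective (π.comp (segL b)) := by
      rw [← LinearMap.ker_eq_bot]
      ext x
      simp only [LinearMap.mem_ker, LinearMap.comp_apply, segL_apply, Submodule.mem_bot]
      exact ⟨hinjb x, fun h => by rw [h, segV_zero_left, map_zero]⟩
    rw [← (Submodule.equivMapOfInjective (π.comp (segL b)) hinj l).finrank_eq]
    exact hl
  · -- image of F1 is {P0}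
    have hsup : l ⊔ Submodule.span k {x0} = ⊤ := by
      have hlt : l < l ⊔ Submodule.span k {x0} := by
        refine lt_of_le_of_ne le_sup_left ?_
        intro h
        apply hx0
        rw [h]
        exact Submodule.mem_sup_right (Submodule.mem_span_singleton_self x0)
      apply Submodule.eq_top_of_finrank_eq
      have h1 : Module.finrank k ↥(l ⊔ Submodule.span k {x0}) ≤ 3 := by
        have h2 := Submodule.finrank_le (l ⊔ Submodule.span k {x0})
        rwa [Module.finrank_fin_fun] at h2
      have h2 := Submodule.finrank_lt_finrank_of_lt hlt
      rw [Module.finrank_fin_fun]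
      omega
    have hdecomp : ∀ x : Fin 3 → k, ∃ m ∈ l, ∃ c : k, x = m + c • x0 := by
      intro x
      have hx : x ∈ l ⊔ Submodule.span k {x0} := by rw [hsup]; trivial
      obtain ⟨m, hm, n, hn, he⟩ := Submodule.mem_sup.mp hx
      obtain ⟨c, rfl⟩ := Submodule.mem_span_singleton.mp hn
      exact ⟨m, hm, c, he.symm⟩
    ext z
    simp only [Set.mem_image, Set.mem_singleton_iff]
    constructor
    · rintro ⟨w, ⟨⟨p, rfl⟩, hwL⟩, rfl⟩
      obtain ⟨c, hc⟩ := rep_segre p a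
      set x : Fin 3 → k := (c : k) • p.rep with hx
      have hwrep : (segre k p a).rep = segV k x ar := hc
      have hxl : x ∉ l := by
        intro hxl
        exact hwL ((hmemWL _).mpr ⟨x, hxl, hwrep⟩)
      have hπx : π (segV k x ar) ≠ 0 := fun h => hxl ((hgen x).mp h)
      have hπw : π (segre k p a).rep ≠ 0 := by rw [hwrep]; exact hπx
      rw [projFrom_eq π _ hπw]
      obtain ⟨m, hm, d, hxd⟩ := hdecomp x
      have hd : d ≠ 0 := by
        intro h
        rw [h, zero_smul, add_zero] at hxd
        exact hxl (hxd ▸ hm)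
      rw [mk_eq_mk_iff]
      refine ⟨Units.mk0 d hd, ?_⟩
      rw [hwrep, hxd, segV_add_left, map_add, segV_smul_left, map_smul]
      rw [(hgen m).mpr hm]
      simp [Units.smul_def]
    · rintro rfl
      set p0 : Pk k 3 := Projectivization.mk k x0 hx0ne with hp0
      obtain ⟨c, hc⟩ := rep_segre p0 a
      obtain ⟨d, hd⟩ := exists_smul_eq_mk_rep k x0 hx0ne
      have hd' : (d : k) • x0 = p0.rep := hd
      have hrep' : (segre k p0 a).rep = ((c : k) * (d : k)) • segV k x0 ar := by
        rw [hc, ← hd', smul_smul, segV_smul_left]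
      have hcd : ((c : k) * (d : k)) ≠ 0 := mul_ne_zero c.ne_zero d.ne_zero
      have hπw : π (segre k p0 a).rep ≠ 0 := by
        rw [hrep', map_smul]
        exact smul_ne_zero hcd hx0π
      refine ⟨segre k p0 a, ⟨⟨p0, rfl⟩, ?_⟩, ?_⟩
      · intro hmem
        apply hπw
        have hm : (segre k p0 a).rep ∈ LinearMap.ker π := by rw [hker]; exact hmem
        exact hm
      · rw [projFrom_eq π _ hπw, mk_eq_mk_iff]
        refine ⟨Units.mk0 _ hcd, ?_⟩
        rw [hrep', map_smul]
        simp [Units.smul_def]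
  · -- image of F2 is projLin WB
    ext z
    simp only [Set.mem_image]
    constructor
    · rintro ⟨w, ⟨⟨p, q, hpl, rfl⟩, hwL⟩, rfl⟩
      obtain ⟨c, hc⟩ := rep_segre p q
      set x : Fin 3 → k := (c : k) • p.rep with hx
      have hxl : x ∈ l := l.smul_mem _ hpl
      have hπw : π (segre k p q).rep ≠ 0 := by
        intro h
        apply hwL
        have hm : (segre k p q).rep ∈ LinearMap.ker π := h
        rw [hker] at hm
        exact hm
      rw [projFrom_eq π _ hπw]
      show (Projectivization.mk k (π (segre k p q).rep) hπw).rep ∈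
        Submodule.map (π.comp (segL b)) l
      obtain ⟨u, hu⟩ := exists_smul_eq_mk_rep k (π (segre k p q).rep) hπw
      rw [← hu]
      apply Submodule.smul_mem
      obtain ⟨cy, dy, hy⟩ := hspan q.rep
      rw [hc, hy, segV_add_right, segV_smul_right, segV_smul_right, map_add, map_smul,
        map_smul, (hgen x).mpr hxl, smul_zero, zero_add]
      exact Submodule.smul_mem _ _ ⟨x, hxl, rfl⟩
    · intro hz
      obtain ⟨x, hxl, hxz⟩ := Submodule.mem_map.mp hz
      simp only [LinearMap.comp_apply, segL_apply] at hxz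
      have hxne : x ≠ 0 := by
        intro h
        apply z.rep_nonzero
        rw [← hxz, h, segV_zero_left, map_zero]
      set p0 : Pk k 3 := Projectivization.mk k x hxne with hp0
      set q0 : Pk k 2 := Projectivization.mk k b hbne with hq0
      obtain ⟨c, hc⟩ := rep_segre p0 q0
      obtain ⟨d, hd⟩ := exists_smul_eq_mk_rep k x hxne
      obtain ⟨e, he⟩ := exists_smul_eq_mk_rep k b hbne
      have hd' : (d : k) • x = p0.rep := hd
      have he' : (e : k) • b = q0.rep := he
      have hrep' : (segre k p0 q0).rep = ((c : k) * (d : k) * (e : k)) • segV k x b := by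
        rw [hc, ← hd', ← he', smul_smul, segV_smul_left, segV_smul_right, smul_smul]
      have hcde : ((c : k) * (d : k) * (e : k)) ≠ 0 :=
        mul_ne_zero (mul_ne_zero c.ne_zero d.ne_zero) e.ne_zero
      have hπw : π (segre k p0 q0).rep ≠ 0 := by
        rw [hrep', map_smul, hxz]
        exact smul_ne_zero hcde z.rep_nonzero
      refine ⟨segre k p0 q0, ⟨⟨p0, q0, ?_, rfl⟩, ?_⟩, ?_⟩
      · rw [← hd']; exact l.smul_mem _ hxl
      · intro hmem
        apply hπw
        have hm : (segre k p0 q0).rep ∈ LinearMap.ker π := by rw [hker]; exact hmem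
        exact hm
      · rw [projFrom_eq π _ hπw]
        conv_rhs => rw [← Projectivization.mk_rep z]
        rw [mk_eq_mk_iff]
        refine ⟨Units.mk0 _ hcde, ?_⟩
        rw [hrep', map_smul, hxz]
        simp [Units.smul_def]
  · -- P0 not on the line
    intro hmem
    have hP0 : (Projectivization.mk k (π (segV k x0 ar)) hx0π).rep ∈
        Submodule.map (π.comp (segL b)) l := hmem
    obtain ⟨u, hu⟩ := exists_smul_eq_mk_rep k (π (segV k x0 ar)) hx0π
    rw [← hu] at hP0
    have hu' : (u : k) • π (segV k x0 ar) ∈ Submodule.map (π.comp (segL b)) l := hP0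
    have hP0' : π (segV k x0 ar) ∈ Submodule.map (π.comp (segL b)) l := by
      have hsm := Submodule.smul_mem (Submodule.map (π.comp (segL b)) l)
        ((u⁻¹ : kˣ) : k) hu'
      rwa [smul_smul, Units.inv_mul, one_smul] at hsm
    obtain ⟨x, hxl, hxe⟩ := Submodule.mem_map.mp hP0'
    simp only [LinearMap.comp_apply, segL_apply] at hxe
    have hker' : segV k x0 ar - segV k x b ∈ LinearMap.ker π := by
      rw [LinearMap.mem_ker, map_sub, hxe, sub_self]
    rw [hker] at hker'
    obtain ⟨x', hx', he⟩ := (hmemWL _).mp hker'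
    have hxx : x0 = x' ∧ (0 : Fin 3 → k) = x := by
      apply seg_key hab
      rw [segV_zero_left, add_zero, ← he]
      abel
    exact hx0 (hxx.1 ▸ hx')
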